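/- arXiv:1705.00796 — 2 statements merged into one kernel-verified Lean document; each statement's English description precedes it below -/
import Mathlib

section
/- Let $1\le r<\infty$, $\kappa>0$ and $a\in(0,1)$. Define $\Psi_\kappa(t):=\int_0^t s^{\kappa-1}\left(\log\left(s^{1/r}+s^{-1/r}\right)\right)^{-r}ds$. Then for every $t\in(0,a)\cup(a^{-1},\infty)$, $\Psi_\kappa(t^r)\le \frac{1}{\kappa(\log 2)^r}\left(a^{(r-1)\kappa}+\left(\log\left(a^{1/r}+a^{-1/r}\right)\right)^{-r}\right)t^{r\kappa}$. -/
open Real MeasureTheory intervalIntegral Set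



/-- `Ψ_κ(t) = ∫_0^t s^{κ-1} (log(s^{1/r} + s^{-1/r}))^{-r} ds`. -/
noncomputable def Psi (r κ t : ℝ) : ℝ :=
  ∫ s in (0:ℝ)..t, s ^ (κ - 1) * (Real.log (s ^ (1 / r) + s ^ (-(1 / r)))) ^ (-r)

lemma final_arith {A X T P κ : ℝ} (hA0 : 0 < A) (hX0 : 0 < X) (hT0 : 0 ≤ T)
    (hPpos : 0 < P) (hP1 : P ≤ 1) (hκ : 0 < κ) :
    P⁻¹ * ((A * T - 0) / κ) + X * ((T - A * T) / κ) ≤ 1 / (κ * P) * (A + X) * T := by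
  have hu : 0 < κ⁻¹ := by positivity
  have hv1 : 1 ≤ P⁻¹ := (one_le_inv₀ hPpos).mpr hP1
  simp only [div_eq_mul_inv, one_div, mul_inv, sub_zero]
  nlinarith [mul_nonneg (mul_nonneg (mul_nonneg hX0.le hT0) hu.le) (sub_nonneg.2 hv1),
    mul_nonneg (mul_nonneg (mul_nonneg hX0.le hA0.le) hT0) hu.le]

lemma two_le_aux {r s : ℝ} (hs : 0 < s) :
    2 ≤ s ^ (1 / r) + s ^ (-(1 / r)) := by
  have hx : 0 < s ^ (1 / r) := Real.rpow_pos_of_pos hs _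
  rw [Real.rpow_neg hs.le]
  nlinarith [sq_nonneg (s ^ (1 / r) - 1), mul_inv_cancel₀ hx.ne']

lemma aux_small {x y : ℝ} (hx : 0 < x) (hxy : x ≤ y) (hy1 : y ≤ 1) :
    y + y⁻¹ ≤ x + x⁻¹ := by
  have hy : 0 < y := hx.trans_le hxy
  have key : x⁻¹ - y⁻¹ = (y - x) / (x * y) := by field_simp
  have h2 : y - x ≤ (y - x) / (x * y) := by
    rw [le_div_iff₀ (mul_pos hx hy)]
    nlinarith [mul_nonneg (sub_nonneg.2 hxy) (sub_nonneg.2 (show x * y ≤ 1 by nlinarith))]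
  linarith

lemma aux_large {x y : ℝ} (hy : 0 < y) (hy1 : y ≤ 1) (hx : y⁻¹ ≤ x) :
    y + y⁻¹ ≤ x + x⁻¹ := by
  have hy' : (1:ℝ) ≤ y⁻¹ := (one_le_inv_iff₀.mpr ⟨hy, hy1⟩)
  have hx0 : 0 < x := lt_of_lt_of_le (by linarith) hx
  have key : y - x⁻¹ = (x - y⁻¹) * (y / x) := by field_simp
  have h2 : (x - y⁻¹) * (y / x) ≤ x - y⁻¹ := by
    apply mul_le_of_le_one_right (by linarith)
    rw [div_le_one hx0]; linarith
  linarith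

lemma log_ge_log2 {r s : ℝ} (hs : 0 < s) :
    Real.log 2 ≤ Real.log (s ^ (1 / r) + s ^ (-(1 / r))) :=
  Real.log_le_log (by norm_num) (two_le_aux hs)

lemma ptwise {r κ M : ℝ} (hM : 0 < M) {s : ℝ} (hs : 0 < s)
    (hb : M ≤ Real.log (s ^ (1 / r) + s ^ (-(1 / r)))) (hr : 0 ≤ r) :
    s ^ (κ - 1) * (Real.log (s ^ (1 / r) + s ^ (-(1 / r)))) ^ (-r) ≤
      s ^ (κ - 1) * M ^ (-r) := by
  apply mul_le_mul_of_nonneg_left _ (Real.rpow_nonneg hs.le _)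
  exact Real.rpow_le_rpow_of_nonpos hM hb (by linarith)

lemma f_meas {r κ : ℝ} :
    Measurable (fun s : ℝ => s ^ (κ - 1) * (Real.log (s ^ (1 / r) + s ^ (-(1 / r)))) ^ (-r)) := by
  measurability

lemma f_intble {r κ : ℝ} (hr : 1 ≤ r) (hκ : 0 < κ) {c d : ℝ} (hc : 0 ≤ c) (hcd : c ≤ d) :
    IntervalIntegrable
      (fun s => s ^ (κ - 1) * (Real.log (s ^ (1 / r) + s ^ (-(1 / r)))) ^ (-r))
      volume c d := by
  have hg : IntervalIntegrable (fun s => s ^ (κ - 1) * (Real.log 2) ^ (-r)) volume c d :=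
    (intervalIntegrable_rpow' (by linarith)).mul_const _
  apply hg.mono_fun' f_meas.aestronglyMeasurable
  rw [Filter.EventuallyLE, ae_restrict_iff' measurableSet_uIoc]
  apply Filter.Eventually.of_forall
  intro s hsm
  rw [Set.uIoc_of_le hcd] at hsm
  have hs : 0 < s := lt_of_le_of_lt hc hsm.1
  have hlog : 0 < Real.log (s ^ (1 / r) + s ^ (-(1 / r))) :=
    lt_of_lt_of_le (Real.log_pos (by norm_num)) (log_ge_log2 hs)
  have hf0 : 0 ≤ s ^ (κ - 1) * (Real.log (s ^ (1 / r) + s ^ (-(1 / r)))) ^ (-r) :=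
    mul_nonneg (Real.rpow_nonneg hs.le _) (Real.rpow_nonneg hlog.le _)
  simp only [Real.norm_eq_abs, abs_of_nonneg hf0]
  exact ptwise (r := r) (κ := κ) (Real.log_pos (by norm_num)) hs (log_ge_log2 hs) (by linarith)

lemma key_bound {r κ c d M : ℝ} (hr : 1 ≤ r) (hκ : 0 < κ) (hc : 0 ≤ c) (hcd : c ≤ d)
    (hM : 0 < M)
    (hb : ∀ s, c ≤ s → s ≤ d → 0 < s → M ≤ Real.log (s ^ (1 / r) + s ^ (-(1 / r)))) :
    (∫ s in c..d, s ^ (κ - 1) * (Real.log (s ^ (1 / r) + s ^ (-(1 / r)))) ^ (-r)) ≤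
      M ^ (-r) * ((d ^ κ - c ^ κ) / κ) := by
  have hg : IntervalIntegrable (fun s => s ^ (κ - 1) * M ^ (-r)) volume c d :=
    (intervalIntegrable_rpow' (by linarith)).mul_const _
  have hmono := intervalIntegral.integral_mono_on hcd (f_intble hr hκ hc hcd) hg ?_
  · calc _ ≤ _ := hmono
      _ = (∫ s in c..d, s ^ (κ - 1)) * M ^ (-r) := intervalIntegral.integral_mul_const _ _
      _ = ((d ^ (κ - 1 + 1) - c ^ (κ - 1 + 1)) / (κ - 1 + 1)) * M ^ (-r) := by
          rw [integral_rpow (Or.inl (by linarith))]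
      _ = M ^ (-r) * ((d ^ κ - c ^ κ) / κ) := by rw [show κ - 1 + 1 = κ by ring]; ring
  · intro x hx
    rcases eq_or_lt_of_le (hc.trans hx.1) with h0 | h0
    · rw [← h0]
      have hr0 : (0:ℝ) < 1 / r := by positivity
      have h1 : (0:ℝ) ^ (1 / r) + (0:ℝ) ^ (-(1 / r)) = 0 := by
        rw [Real.zero_rpow hr0.ne', Real.zero_rpow (by simpa using (show r ≠ 0 by linarith)), add_zero]
      rw [h1]
      simp only [Real.log_zero]
      rw [Real.zero_rpow (by intro h; rw [neg_eq_zero] at h; linarith : -r ≠ 0), mul_zero]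
      positivity
    · exact ptwise (r := r) (κ := κ) hM h0 (hb x hx.1 hx.2 h0) (by linarith)


/-- for `1 ≤ r < ∞`, `κ > 0`, `a ∈ (0,1)` and every
`t ∈ (0,a) ∪ (a⁻¹,∞)`,
`Ψ_κ(t^r) ≤ (κ (log 2)^r)⁻¹ (a^{(r-1)κ} + (log(a^{1/r} + a^{-1/r}))^{-r}) t^{rκ}`. -/
theorem stmt8 (r κ a : ℝ) (hr : 1 ≤ r) (hκ : 0 < κ) (ha0 : 0 < a) (ha1 : a < 1)
    (t : ℝ) (ht : (0 < t ∧ t < a) ∨ a⁻¹ < t) :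
    Psi r κ (t ^ r) ≤
      (1 / (κ * Real.log 2 ^ r)) *
        (a ^ ((r - 1) * κ) + (Real.log (a ^ (1 / r) + a ^ (-(1 / r)))) ^ (-r)) *
        t ^ (r * κ) := by
  have hr0 : (0:ℝ) < r := by linarith
  have hlog2 : 0 < Real.log 2 := Real.log_pos (by norm_num)
  have hlog2le : Real.log 2 ≤ 1 := by
    nlinarith [Real.log_le_sub_one_of_pos (by norm_num : (0:ℝ) < 2)]
  have hLpos : 0 < Real.log (a ^ (1 / r) + a ^ (-(1 / r))) :=
    lt_of_lt_of_le hlog2 (log_ge_log2 ha0)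
  have hPpos : 0 < Real.log 2 ^ r := Real.rpow_pos_of_pos hlog2 r
  have hP1 : Real.log 2 ^ r ≤ 1 := Real.rpow_le_one hlog2.le hlog2le hr0.le
  have hA0 : 0 < a ^ ((r - 1) * κ) := Real.rpow_pos_of_pos ha0 _
  have hX0 : 0 < (Real.log (a ^ (1 / r) + a ^ (-(1 / r)))) ^ (-r) :=
    Real.rpow_pos_of_pos hLpos _
  have hy1 : a ^ (1 / r) ≤ 1 := Real.rpow_le_one ha0.le ha1.le (by positivity)
  have hy0 : 0 < a ^ (1 / r) := Real.rpow_pos_of_pos ha0 _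
  set A := a ^ ((r - 1) * κ)
  set X := (Real.log (a ^ (1 / r) + a ^ (-(1 / r)))) ^ (-r)
  set P := Real.log 2 ^ r
  rcases ht with ⟨ht0, hta⟩ | hta
  · -- small t
    have hT0 : 0 ≤ t ^ (r * κ) := Real.rpow_nonneg ht0.le _
    have htr0 : (0:ℝ) ≤ t ^ r := Real.rpow_nonneg ht0.le r
    have htra : t ^ r ≤ a := by
      calc t ^ r ≤ t ^ (1:ℝ) :=
            Real.rpow_le_rpow_of_exponent_ge ht0 (le_of_lt (hta.trans ha1)) hr
        _ = t := Real.rpow_one t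
        _ ≤ a := hta.le
    have hkey := key_bound (c := 0) (d := t ^ r) hr hκ le_rfl htr0 hLpos ?_
    · simp only [Psi]
      refine hkey.trans ?_
      rw [Real.zero_rpow hκ.ne', ← Real.rpow_mul ht0.le]
      rw [show X * ((t ^ (r * κ) - 0) / κ) = X * t ^ (r * κ) / κ by ring,
        show (1 / (κ * P)) * (A + X) * t ^ (r * κ) = (A + X) * t ^ (r * κ) / (κ * P) by ring,
        div_le_div_iff₀ hκ (by positivity)]
      nlinarith [mul_nonneg (mul_nonneg (mul_nonneg hX0.le hT0) hκ.le) (sub_nonneg.2 hP1),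
        mul_nonneg (mul_nonneg hA0.le hT0) hκ.le]
    · intro s _ hsd hs
      have hx0 : 0 < s ^ (1 / r) := Real.rpow_pos_of_pos hs _
      apply Real.log_le_log (by positivity)
      rw [Real.rpow_neg hs.le, Real.rpow_neg ha0.le]
      exact aux_small hx0 (Real.rpow_le_rpow hs.le (hsd.trans htra) (by positivity)) hy1
  · -- large t
    have ht0 : 0 < t := lt_trans (by positivity) hta
    have hT0 : 0 ≤ t ^ (r * κ) := Real.rpow_nonneg ht0.le _
    have hs0pos : 0 < a ^ (r - 1) * t ^ r :=
      mul_pos (Real.rpow_pos_of_pos ha0 _) (Real.rpow_pos_of_pos ht0 _)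
    have hinvr : (a⁻¹ : ℝ) ^ r ≤ t ^ r :=
      Real.rpow_le_rpow (by positivity) hta.le hr0.le
    have hs0inv : a⁻¹ ≤ a ^ (r - 1) * t ^ r := by
      have heq : a ^ (r - 1) * (a⁻¹ : ℝ) ^ r = a⁻¹ := by
        rw [Real.inv_rpow ha0.le, ← Real.rpow_neg ha0.le, ← Real.rpow_add ha0,
          show r - 1 + -r = -1 by ring, Real.rpow_neg_one]
      calc a⁻¹ = a ^ (r - 1) * (a⁻¹ : ℝ) ^ r := heq.symm
        _ ≤ a ^ (r - 1) * t ^ r :=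
            mul_le_mul_of_nonneg_left hinvr (Real.rpow_nonneg ha0.le _)
    have hs0le : a ^ (r - 1) * t ^ r ≤ t ^ r := by
      have h1 : a ^ (r - 1) ≤ 1 := Real.rpow_le_one ha0.le ha1.le (by linarith)
      nlinarith [Real.rpow_pos_of_pos ht0 r]
    have hsplit := intervalIntegral.integral_add_adjacent_intervals
      (f_intble (c := 0) (d := a ^ (r - 1) * t ^ r) hr hκ le_rfl hs0pos.le)
      (f_intble hr hκ hs0pos.le hs0le)
    have bound1 := key_bound (c := 0) (d := a ^ (r - 1) * t ^ r) hr hκ le_rfl hs0pos.le hlog2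
      (fun s _ _ hs => log_ge_log2 hs)
    have bound2 := key_bound (c := a ^ (r - 1) * t ^ r) (d := t ^ r) hr hκ hs0pos.le hs0le
      hLpos ?_
    · have hs0k : (a ^ (r - 1) * t ^ r) ^ κ = A * t ^ (r * κ) := by
        rw [Real.mul_rpow (Real.rpow_nonneg ha0.le _) (Real.rpow_nonneg ht0.le _),
          ← Real.rpow_mul ha0.le, ← Real.rpow_mul ht0.le]
      simp only [Psi]
      rw [← hsplit]
      refine le_trans (add_le_add bound1 bound2) ?_
      rw [Real.zero_rpow hκ.ne', hs0k, ← Real.rpow_mul ht0.le,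
        show Real.log 2 ^ (-r) = P⁻¹ by rw [Real.rpow_neg hlog2.le]]
      exact final_arith hA0 hX0 hT0 hPpos hP1 hκ
    · intro s hs1 _ hs
      have hx0 : 0 < s ^ (1 / r) := Real.rpow_pos_of_pos hs _
      apply Real.log_le_log (by positivity)
      rw [Real.rpow_neg hs.le, Real.rpow_neg ha0.le]
      apply aux_large hy0 hy1
      rw [← Real.inv_rpow ha0.le]
      exact Real.rpow_le_rpow (by positivity) (le_trans hs0inv hs1) (by positivity)
end

section
/- Let $h\in\mathbb{C}\setminus\{0\}$ and $\varepsilon>0$ with $\varepsilon>2|h|$. Then there exists a constant $C_\varepsilon>0$ (depending only on $\varepsilon$) such that $\sup_{0<t\le 1} t^{\varepsilon}\left|\frac{\exp(h\log t)-1}{h\log t}-1\right| \le C_\varepsilon |h|$. -/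
/-- for `ε > 0` there is `C_ε > 0` (depending only on `ε`) such that for every
`h ∈ ℂ \ {0}` with `ε > 2|h|`,
`sup_{0<t<1} t^ε |((exp(h log t) - 1)/(h log t)) - 1| ≤ C_ε |h|`
(the point `t = 1` contributes `0` by the limit convention). -/
theorem stmt9 (ε : ℝ) (hε : 0 < ε) :
    ∃ C : ℝ, 0 < C ∧ ∀ h : ℂ, h ≠ 0 → 2 * ‖h‖ < ε →
      ∀ t : ℝ, 0 < t → t < 1 →
        t ^ ε * ‖(Complex.exp (h * (Real.log t : ℂ)) - 1) /
            (h * (Real.log t : ℂ)) - 1‖ ≤ C * ‖h‖ := by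
  refine ⟨6 / ε, by positivity, ?_⟩
  intro h hh hhε t ht ht1
  set L : ℝ := Real.log t with hLdef
  have hL : L < 0 := Real.log_neg ht ht1
  have hLne : (L : ℂ) ≠ 0 := by exact_mod_cast hL.ne
  set z : ℂ := h * (L : ℂ) with hz
  have hzne : z ≠ 0 := mul_ne_zero hh hLne
  have habs : ‖z‖ = ‖h‖ * (-L) := by
    rw [hz, norm_mul, Complex.norm_real, Real.norm_eq_abs, abs_of_neg hL]
  have hah : 0 < ‖h‖ := norm_pos_iff.mpr hh
  have hhalf : ‖h‖ ≤ ε / 2 := by linarith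
  have htε : (0:ℝ) < t ^ ε := Real.rpow_pos_of_pos ht ε
  have hza : 0 < ‖z‖ := norm_pos_iff.mpr hzne
  rcases le_or_gt (‖z‖) 1 with hc | hc
  · -- small |z|: |(e^z-1)/z - 1| ≤ |z|
    have h1 : ‖(Complex.exp z - 1) / z - 1‖ ≤ ‖z‖ := by
      have he : (Complex.exp z - 1) / z - 1 = (Complex.exp z - 1 - z) / z := by
        field_simp
      rw [he, norm_div, div_le_iff₀ hza]
      calc ‖Complex.exp z - 1 - z‖ ≤ ‖z‖ ^ 2 :=
            Complex.norm_exp_sub_one_sub_id_le hc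
        _ = ‖z‖ * ‖z‖ := sq _
    have h2 : t ^ ε * (-L) ≤ 1 / ε := by
      have hlog : -ε * L ≤ t ^ (-ε) := by
        have := Real.log_le_sub_one_of_pos (Real.rpow_pos_of_pos ht (-ε))
        rw [Real.log_rpow ht] at this
        have : (0:ℝ) < t ^ (-ε) := Real.rpow_pos_of_pos ht (-ε)
        nlinarith [Real.log_le_sub_one_of_pos (Real.rpow_pos_of_pos ht (-ε)),
          Real.log_rpow ht (-ε)]
      have hinv : t ^ (-ε) = (t ^ ε)⁻¹ := Real.rpow_neg ht.le ε
      rw [hinv] at hlog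
      rw [le_div_iff₀ hε]
      nlinarith [mul_le_mul_of_nonneg_left hlog htε.le, mul_inv_cancel₀ htε.ne']
    calc t ^ ε * ‖(Complex.exp z - 1) / z - 1‖
        ≤ t ^ ε * (‖h‖ * (-L)) := by
          rw [← habs]; exact mul_le_mul_of_nonneg_left h1 htε.le
      _ = (t ^ ε * (-L)) * ‖h‖ := by ring
      _ ≤ (1 / ε) * ‖h‖ := by
          exact mul_le_mul_of_nonneg_right h2 hah.le
      _ ≤ (6 / ε) * ‖h‖ := by
          apply mul_le_mul_of_nonneg_right _ hah.le
          gcongr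
          norm_num
  · -- large |z|: |(e^z-1)/z - 1| ≤ 3 exp|z|
    have h1 : ‖(Complex.exp z - 1) / z - 1‖ ≤ 3 * Real.exp (‖z‖) := by
      have e1 : Real.exp (‖z‖) ≥ 1 :=
        Real.one_le_exp (by positivity)
      have e2 : ‖Complex.exp z‖ ≤ Real.exp (‖z‖) := by
        rw [Complex.norm_exp]
        exact Real.exp_le_exp.2 (Complex.re_le_norm z)
      calc ‖(Complex.exp z - 1) / z - 1‖
          ≤ ‖(Complex.exp z - 1) / z‖ + 1 := by
            simpa using (norm_sub_le ((Complex.exp z - 1) / z) 1)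
        _ ≤ ‖Complex.exp z - 1‖ + 1 := by
            rw [norm_div]
            have : ‖Complex.exp z - 1‖ / ‖z‖
                ≤ ‖Complex.exp z - 1‖ / 1 :=
              div_le_div_of_nonneg_left (by positivity) one_pos hc.le
            simpa using this
        _ ≤ (‖Complex.exp z‖ + 1) + 1 := by
            have := norm_sub_le (Complex.exp z) 1
            simpa using this
        _ ≤ 3 * Real.exp (‖z‖) := by nlinarith
    have hzle : ‖z‖ ≤ (ε / 2) * (-L) := by
      rw [habs]
      exact mul_le_mul_of_nonneg_right hhalf (by linarith)
    have e3 : Real.exp (‖z‖) ≤ t ^ (-(ε / 2)) := by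
      rw [Real.rpow_def_of_pos ht]
      exact Real.exp_le_exp.2 (by rw [← hLdef]; linarith [hzle])
    have hcomb : t ^ ε * t ^ (-(ε / 2)) = t ^ (ε / 2) := by
      rw [← Real.rpow_add ht]; ring_nf
    have hLbig : 1 / ‖h‖ < -L := by
      rw [habs] at hc
      rw [div_lt_iff₀ hah, mul_comm]
      exact hc
    have hfin : t ^ (ε / 2) ≤ 2 / ε * ‖h‖ := by
      have : t ^ (ε / 2) = Real.exp (L * (ε / 2)) := Real.rpow_def_of_pos ht _
      rw [this]
      have step : L * (ε / 2) ≤ -(ε / 2 / ‖h‖) := by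
        have := mul_le_mul_of_nonneg_left hLbig.le (by positivity : (0:ℝ) ≤ ε / 2)
        rw [mul_one_div] at this
        nlinarith
      calc Real.exp (L * (ε / 2)) ≤ Real.exp (-(ε / 2 / ‖h‖)) :=
            Real.exp_le_exp.2 step
        _ = (Real.exp (ε / 2 / ‖h‖))⁻¹ := Real.exp_neg _
        _ ≤ (ε / 2 / ‖h‖)⁻¹ := by
            apply inv_anti₀ (by positivity)
            have := Real.add_one_le_exp (ε / 2 / ‖h‖)
            linarith
        _ = 2 / ε * ‖h‖ := by field_simp
    calc t ^ ε * ‖(Complex.exp z - 1) / z - 1‖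
        ≤ t ^ ε * (3 * Real.exp (‖z‖)) :=
          mul_le_mul_of_nonneg_left h1 htε.le
      _ ≤ t ^ ε * (3 * t ^ (-(ε / 2))) := by
          apply mul_le_mul_of_nonneg_left _ htε.le
          linarith [e3]
      _ = 3 * (t ^ ε * t ^ (-(ε / 2))) := by ring
      _ = 3 * t ^ (ε / 2) := by rw [hcomb]
      _ ≤ 3 * (2 / ε * ‖h‖) := by linarith [hfin]
      _ = 6 / ε * ‖h‖ := by ring
end
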